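/- Let ω, μ, t ∈ ℝ and Λ ∈ (0, π/2) satisfy ( (2√3 e^ω)/tan Λ − 2 sin 2t )² = e^{ω+μ} − 2 − 2 cos 4t. Then −4 e^ω (cos 2Λ + 2) csc²Λ + 8√3 cot Λ sin 2t + 8 sinh ω = −e^μ. (Consequently, under this algebraic relation, the compatibility equation Δμ = −4e^ω(cos 2Λ + 2)csc²Λ + 8√3 cot Λ sin 2t + 8 sinh ω reduces to the Liouville equation Δμ = −e^μ.) -/

import Mathlib

noncomputable section

open Real

/-- under the algebraic relation
`((2√3 e^ω)/tan Λ − 2 sin 2t)² = e^{ω+μ} − 2 − 2 cos 4t`, one has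
`−4e^ω(cos 2Λ + 2)csc²Λ + 8√3 cot Λ sin 2t + 8 sinh ω = −e^μ`;
hence the compatibility equation for `μ` reduces to the Liouville equation. -/
theorem stmt14 (ω μ t Λ : ℝ) (hΛ : Λ ∈ Set.Ioo 0 (π / 2))
    (h : (2 * Real.sqrt 3 * Real.exp ω / Real.tan Λ - 2 * Real.sin (2 * t)) ^ 2
      = Real.exp (ω + μ) - 2 - 2 * Real.cos (4 * t)) :
    -4 * Real.exp ω * (Real.cos (2 * Λ) + 2) / Real.sin Λ ^ 2
      + 8 * Real.sqrt 3 * (Real.cos Λ / Real.sin Λ) * Real.sin (2 * t)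
      + 8 * Real.sinh ω
      = -Real.exp μ := by
  obtain ⟨h1, h2⟩ := hΛ
  have hs : Real.sin Λ > 0 := Real.sin_pos_of_pos_of_lt_pi h1 (h2.trans (by linarith [Real.pi_pos]))
  have hc : Real.cos Λ > 0 := Real.cos_pos_of_mem_Ioo ⟨by linarith [Real.pi_pos], h2⟩
  have hsq : Real.sqrt 3 ^ 2 = 3 := Real.sq_sqrt (by norm_num)
  have hpyth : Real.sin Λ ^ 2 + Real.cos Λ ^ 2 = 1 := Real.sin_sq_add_cos_sq Λ
  have hcos2 : Real.cos (2 * Λ) = 1 - 2 * Real.sin Λ ^ 2 := by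
    rw [Real.cos_two_mul']; nlinarith [Real.sin_sq_add_cos_sq Λ]
  have hcos4 : Real.cos (4 * t) = 1 - 2 * Real.sin (2 * t) ^ 2 := by
    have e : (4 : ℝ) * t = 2 * (2 * t) := by ring
    rw [e, Real.cos_two_mul']; nlinarith [Real.sin_sq_add_cos_sq (2*t)]
  rw [Real.tan_eq_sin_div_cos, Real.exp_add, hcos4] at h
  rw [Real.sinh_eq, Real.exp_neg, hcos2]
  have hexp : Real.exp ω > 0 := Real.exp_pos ω
  field_simp at h ⊢
  linear_combination (-2)*h + (8*Real.exp ω^2*Real.cos Λ^2)*hsq + 24*Real.exp ω^2*hpyth
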